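/- Let π_Q and π_{Q̃} be the exponentially tilted probability densities obtained from π_base via Q and Q̃ respectively, with inverse temperature β > 0, where ‖Q − Q̃‖_∞ ≤ ε. Then the Kullback–Leibler divergence satisfies D_KL(π_Q ‖ π_{Q̃}) = ∫ π_Q(a) log(π_Q(a)/π_{Q̃}(a)) dμ(a) ≤ 2βε. -/

import Mathlib

open MeasureTheory Real

/-- Let `πQ` and `πQ'` be the exponentially tilted probability densities
obtained from `πb` via `Q` and `Q'` respectively, with inverse temperature `β > 0`, where
`‖Q − Q'‖_∞ ≤ ε`.  Then the Kullback–Leibler divergence satisfies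
`D_KL(πQ ‖ πQ') = ∫ πQ(a) log(πQ(a)/πQ'(a)) dμ(a) ≤ 2βε`. -/
theorem stmt_0 {α : Type*} [MeasurableSpace α] (μ : Measure α) [SigmaFinite μ]
    (πb Q Q' : α → ℝ) (β ε : ℝ) (hβ : 0 < β) (hε : 0 ≤ ε)
    (hπb_meas : Measurable πb) (hπb_pos : ∀ᵐ a ∂μ, 0 < πb a)
    (hπb_prob : ∫ a, πb a ∂μ = 1)
    (hQ_meas : Measurable Q) (hQ'_meas : Measurable Q')
    (hQ_bdd : ∃ C, ∀ a, |Q a| ≤ C) (hQ'_bdd : ∃ C, ∀ a, |Q' a| ≤ C)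
    (hdiff : ∀ a, |Q a - Q' a| ≤ ε)
    (ZQ ZQ' : ℝ)
    (hZQ : ZQ = ∫ a, πb a * exp (β * Q a) ∂μ)
    (hZQ' : ZQ' = ∫ a, πb a * exp (β * Q' a) ∂μ)
    (hZQ_int : Integrable (fun a => πb a * exp (β * Q a)) μ)
    (hZQ'_int : Integrable (fun a => πb a * exp (β * Q' a)) μ)
    (hZQ_pos : 0 < ZQ) (hZQ'_pos : 0 < ZQ')
    (πQ πQ' : α → ℝ)
    (hπQ : ∀ a, πQ a = πb a * exp (β * Q a) / ZQ)
    (hπQ' : ∀ a, πQ' a = πb a * exp (β * Q' a) / ZQ') :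
    ∫ a, πQ a * Real.log (πQ a / πQ' a) ∂μ ≤ 2 * β * ε := by
  have hfQ : πQ = fun a => πb a * exp (β * Q a) / ZQ := funext hπQ
  have hfQ' : πQ' = fun a => πb a * exp (β * Q' a) / ZQ' := funext hπQ'
  subst hfQ hfQ'
  have hπQ_int : Integrable (fun a => πb a * exp (β * Q a) / ZQ) μ :=
    hZQ_int.div_const ZQ
  have hπQ_one : ∫ a, πb a * exp (β * Q a) / ZQ ∂μ = 1 := by
    rw [integral_div, ← hZQ, div_self hZQ_pos.ne']
  -- a.e. rewrite of the log term
  have hlog : ∀ᵐ a ∂μ,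
      (πb a * exp (β * Q a) / ZQ) *
        Real.log ((πb a * exp (β * Q a) / ZQ) / (πb a * exp (β * Q' a) / ZQ')) =
      (πb a * exp (β * Q a) / ZQ) * (β * (Q a - Q' a))
        + (πb a * exp (β * Q a) / ZQ) * (Real.log ZQ' - Real.log ZQ) := by
    filter_upwards [hπb_pos] with a ha
    have h1 : (πb a * exp (β * Q a) / ZQ) / (πb a * exp (β * Q' a) / ZQ')
        = exp (β * Q a - β * Q' a) * (ZQ' / ZQ) := by
      rw [Real.exp_sub]
      field_simp
    rw [h1, Real.log_mul (Real.exp_ne_zero _)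
        (div_ne_zero hZQ'_pos.ne' hZQ_pos.ne'),
      Real.log_exp, Real.log_div hZQ'_pos.ne' hZQ_pos.ne']
    ring
  have hdiff_int : Integrable
      (fun a => (πb a * exp (β * Q a) / ZQ) * (β * (Q a - Q' a))) μ := by
    have := Integrable.bdd_mul (c := β * ε) hπQ_int
      ((hQ_meas.sub hQ'_meas).const_mul β).aestronglyMeasurable
      (Filter.Eventually.of_forall fun a => by
        rw [Real.norm_eq_abs, abs_mul, abs_of_pos hβ]
        exact mul_le_mul_of_nonneg_left (hdiff a) hβ.le)
    simpa [mul_comm] using this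
  have hconst_int : Integrable
      (fun a => (πb a * exp (β * Q a) / ZQ) * (Real.log ZQ' - Real.log ZQ)) μ :=
    hπQ_int.mul_const _
  rw [integral_congr_ae hlog, integral_add hdiff_int hconst_int,
    integral_mul_const, hπQ_one, one_mul]
  -- bound the first term
  have hπQ_nn : ∀ᵐ a ∂μ, 0 ≤ πb a * exp (β * Q a) / ZQ := by
    filter_upwards [hπb_pos] with a ha
    positivity
  have hB1 : ∫ a, (πb a * exp (β * Q a) / ZQ) * (β * (Q a - Q' a)) ∂μ ≤ β * ε := by
    have hmono : ∀ᵐ a ∂μ,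
        (πb a * exp (β * Q a) / ZQ) * (β * (Q a - Q' a)) ≤
        (πb a * exp (β * Q a) / ZQ) * (β * ε) := by
      filter_upwards [hπQ_nn] with a ha
      exact mul_le_mul_of_nonneg_left
        (mul_le_mul_of_nonneg_left ((abs_le.mp (hdiff a)).2) hβ.le) ha
    calc ∫ a, (πb a * exp (β * Q a) / ZQ) * (β * (Q a - Q' a)) ∂μ
        ≤ ∫ a, (πb a * exp (β * Q a) / ZQ) * (β * ε) ∂μ :=
          integral_mono_ae hdiff_int (hπQ_int.mul_const _) hmono
      _ = β * ε := by rw [integral_mul_const, hπQ_one, one_mul]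
  -- bound the second term
  have hZle : ZQ' ≤ exp (β * ε) * ZQ := by
    rw [hZQ, hZQ', ← integral_const_mul]
    refine integral_mono_ae hZQ'_int (hZQ_int.const_mul _) ?_
    filter_upwards [hπb_pos] with a ha
    have hQ'le : β * Q' a ≤ β * Q a + β * ε := by
      have := (abs_le.mp (hdiff a)).1
      nlinarith
    calc πb a * exp (β * Q' a) ≤ πb a * exp (β * Q a + β * ε) :=
          mul_le_mul_of_nonneg_left (Real.exp_le_exp.mpr hQ'le) ha.le
      _ = exp (β * ε) * (πb a * exp (β * Q a)) := by
          rw [Real.exp_add]; ring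
  have hB2 : Real.log ZQ' - Real.log ZQ ≤ β * ε := by
    have := Real.log_le_log hZQ'_pos hZle
    rw [Real.log_mul (Real.exp_ne_zero _) hZQ_pos.ne', Real.log_exp] at this
    linarith
  linarith
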